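/- An E-linear code C of length 2n satisfies |C| · |C^{⊥_{S_L}}| = 4^{2n} · 2^{k₂} where k₂ = dim(C_Tor) − dim(C_Res); consequently, C is left symplectic nice (|C|·|C^{⊥_{S_L}}| = |E|^{2n}) if and only if C is free, and in that case C^{⊥_{S_L}} = C^{⊥_S}. -/

import Mathlib

open Finset

/-- The non-unital ring `E`, realized as pairs `(u, v) ∈ F₂ × F₂`
representing `uκ + vζ`. -/
def Ering : Type := (ZMod 2) × (ZMod 2)

namespace Ering

instance : AddCommGroup Ering := inferInstanceAs (AddCommGroup ((ZMod 2) × (ZMod 2)))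
instance : DecidableEq Ering := inferInstanceAs (DecidableEq ((ZMod 2) × (ZMod 2)))
instance : Fintype Ering := inferInstanceAs (Fintype ((ZMod 2) × (ZMod 2)))

instance : Mul Ering := ⟨fun a b => (a.1 * b.1, a.2 * b.1)⟩

instance : NonUnitalRing Ering :=
  { (inferInstance : AddCommGroup Ering), (inferInstance : Mul Ering) with
    left_distrib := by decide
    right_distrib := by decide
    zero_mul := by decide
    mul_zero := by decide
    mul_assoc := by decide }

/-- The generator κ. -/
def kappa : Ering := ((1 : ZMod 2), (0 : ZMod 2))
/-- The generator τ. -/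
def tau : Ering := ((1 : ZMod 2), (1 : ZMod 2))
/-- ζ = κ + τ. -/
def zeta : Ering := ((0 : ZMod 2), (1 : ZMod 2))

/-- The scalar action of `F₂` on `E`: `u • e = e` if `u = 1`, else `0`. -/
def fsmul (u : ZMod 2) (e : Ering) : Ering := if u = 1 then e else 0

/-- `E`-vectors of length `2n`, written as a pair `(u | v)` of halves of length `n`. -/
abbrev VE (n : ℕ) := (Fin n → Ering) × (Fin n → Ering)

/-- `F₂`-vectors of length `2n`, written as a pair of halves of length `n`. -/
abbrev VF (n : ℕ) := (Fin n → ZMod 2) × (Fin n → ZMod 2)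

/-- Symplectic inner product on `E^{2n}`: `⟨(u|v),(u'|v')⟩ₛ = ⟨u,v'⟩ + ⟨v,u'⟩`. -/
def sympE {n : ℕ} (x y : VE n) : Ering := ∑ i, x.1 i * y.2 i + ∑ i, x.2 i * y.1 i

/-- Symplectic inner product on `F₂^{2n}`. -/
def sympF {n : ℕ} (x y : VF n) : ZMod 2 := ∑ i, x.1 i * y.2 i + ∑ i, x.2 i * y.1 i

/-- An `E`-linear code: a left `E`-submodule of `E^{2n}`. -/
def IsLinearCode {n : ℕ} (C : Set (VE n)) : Prop :=
  (0 : VE n) ∈ C ∧ (∀ x ∈ C, ∀ y ∈ C, x + y ∈ C) ∧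
    (∀ e : Ering, ∀ x ∈ C, ((fun i => e * x.1 i, fun i => e * x.2 i) : VE n) ∈ C)

/-- Componentwise reduction `π : E^{2n} → F₂^{2n}`, `π(uκ + vζ) = u`. -/
def resVec {n : ℕ} (x : VE n) : VF n := (fun i => (x.1 i).1, fun i => (x.2 i).1)

/-- For `e ∈ E` and `v ∈ F₂^{2n}`, the vector `ev ∈ E^{2n}` with entries `vᵢ • e`. -/
def evec {n : ℕ} (e : Ering) (v : VF n) : VE n :=
  (fun i => fsmul (v.1 i) e, fun i => fsmul (v.2 i) e)

/-- The residue code `C_Res = π(C)`. -/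
def resCode {n : ℕ} (C : Set (VE n)) : Set (VF n) := resVec '' C

/-- The torsion code `C_Tor = {v : ζv ∈ C}`. -/
def torCode {n : ℕ} (C : Set (VE n)) : Set (VF n) := {v | evec zeta v ∈ C}

/-- The left symplectic dual. -/
def leftDual {n : ℕ} (C : Set (VE n)) : Set (VE n) := {z | ∀ w ∈ C, sympE z w = 0}

/-- The right symplectic dual. -/
def rightDual {n : ℕ} (C : Set (VE n)) : Set (VE n) := {z | ∀ w ∈ C, sympE w z = 0}

/-- The two-sided symplectic dual. -/
def dual {n : ℕ} (C : Set (VE n)) : Set (VE n) := leftDual C ∩ rightDual C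

/-- The binary symplectic dual of `D ⊆ F₂^{2n}`. -/
def dualF {n : ℕ} (D : Set (VF n)) : Set (VF n) := {z | ∀ w ∈ D, sympF z w = 0}

/-- The two-sided symplectic hull. -/
def SHull {n : ℕ} (C : Set (VE n)) : Set (VE n) := C ∩ dual C

/-- The left symplectic hull. -/
def LSHull {n : ℕ} (C : Set (VE n)) : Set (VE n) := C ∩ leftDual C

/-- The right symplectic hull. -/
def RSHull {n : ℕ} (C : Set (VE n)) : Set (VE n) := C ∩ rightDual C

/-- Symplectic hull of a binary code. -/
def SHullF {n : ℕ} (D : Set (VF n)) : Set (VF n) := D ∩ dualF D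

/-- A free `E`-linear code: residue and torsion codes coincide. -/
def IsFree {n : ℕ} (C : Set (VE n)) : Prop := resCode C = torCode C

end Ering

namespace Ering

variable {n : ℕ}

/-- second components of an `E`-vector -/
def zvec {n : ℕ} (x : VE n) : VF n := (fun i => (x.1 i).2, fun i => (x.2 i).2)

lemma sympF_comm (x y : VF n) : sympF x y = sympF y x := by
  simp only [sympF]
  rw [add_comm]
  congr 1 <;> exact Finset.sum_congr rfl fun i _ => mul_comm _ _

/-- first projection as an additive hom -/
def p1 : Ering →+ ZMod 2 :=
  { toFun := fun e => e.1, map_zero' := rfl, map_add' := fun _ _ => rfl }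

/-- second projection as an additive hom -/
def p2 : Ering →+ ZMod 2 :=
  { toFun := fun e => e.2, map_zero' := rfl, map_add' := fun _ _ => rfl }

lemma ering_eq_zero_iff (e : Ering) : e = 0 ↔ p1 e = 0 ∧ p2 e = 0 := by
  constructor
  · rintro rfl; exact ⟨rfl, rfl⟩
  · rintro ⟨h1, h2⟩
    show (e : ZMod 2 × ZMod 2) = 0
    exact Prod.ext h1 h2

lemma p1_sympE (z w : VE n) : p1 (sympE z w) = sympF (resVec z) (resVec w) := by
  simp only [sympE, map_add, map_sum]
  rfl

lemma p2_sympE (z w : VE n) : p2 (sympE z w) = sympF (zvec z) (resVec w) := by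
  simp only [sympE, map_add, map_sum]
  rfl

lemma sympE_eq_zero_iff (z w : VE n) :
    sympE z w = 0 ↔ sympF (resVec z) (resVec w) = 0 ∧ sympF (zvec z) (resVec w) = 0 := by
  rw [ering_eq_zero_iff, p1_sympE, p2_sympE]

lemma mem_leftDual_iff {C : Set (VE n)} (z : VE n) :
    z ∈ leftDual C ↔ resVec z ∈ dualF (resCode C) ∧ zvec z ∈ dualF (resCode C) := by
  constructor
  · intro h
    constructor <;> rintro r ⟨w, hw, rfl⟩
    · exact ((sympE_eq_zero_iff z w).1 (h w hw)).1
    · exact ((sympE_eq_zero_iff z w).1 (h w hw)).2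
  · rintro ⟨h1, h2⟩ w hw
    exact (sympE_eq_zero_iff z w).2 ⟨h1 _ ⟨w, hw, rfl⟩, h2 _ ⟨w, hw, rfl⟩⟩

lemma e_neg : ∀ e : Ering, -e = e := by decide
lemma e_k : ∀ e : Ering, fsmul e.2 zeta = e + kappa * e := by decide
lemma e_r : ∀ e : Ering, fsmul e.1 zeta = zeta * e := by decide
lemma e_z1 : ∀ a : ZMod 2, (fsmul a zeta).1 = 0 := by decide
lemma e_z2 : ∀ a : ZMod 2, (fsmul a zeta).2 = a := by decide
lemma e_ker : ∀ e : Ering, e.1 = 0 → fsmul e.2 zeta = e := by decide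
lemma e_fadd : ∀ a b : ZMod 2, fsmul (a + b) zeta = fsmul a zeta + fsmul b zeta := by decide
lemma e_fzero : fsmul (0 : ZMod 2) zeta = 0 := by decide

lemma resVec_add (x y : VE n) : resVec (x + y) = resVec x + resVec y := rfl

lemma evec_zeta_add (u v : VF n) : evec zeta (u + v) = evec zeta u + evec zeta v := by
  refine Prod.ext (funext fun i => ?_) (funext fun i => ?_) <;> exact e_fadd _ _

lemma zvec_evec (v : VF n) : zvec (evec zeta v) = v := by
  refine Prod.ext (funext fun i => ?_) (funext fun i => ?_) <;> exact e_z2 _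

lemma resVec_evec (v : VF n) : resVec (evec zeta v) = 0 := by
  refine Prod.ext (funext fun i => ?_) (funext fun i => ?_) <;> exact e_z1 _

lemma res_sub_tor {C : Set (VE n)} (hC : IsLinearCode C) : resCode C ⊆ torCode C := by
  rintro r ⟨w, hw, rfl⟩
  have h : evec zeta (resVec w) =
      ((fun i => zeta * w.1 i, fun i => zeta * w.2 i) : VE n) :=
    Prod.ext (funext fun i => e_r _) (funext fun i => e_r _)
  show evec zeta (resVec w) ∈ C
  rw [h]
  exact hC.2.2 zeta w hw

lemma zvec_mem_tor {C : Set (VE n)} (hC : IsLinearCode C) {w : VE n} (hw : w ∈ C) :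
    zvec w ∈ torCode C := by
  have h : evec zeta (zvec w) =
      w + ((fun i => kappa * w.1 i, fun i => kappa * w.2 i) : VE n) :=
    Prod.ext (funext fun i => e_k _) (funext fun i => e_k _)
  show evec zeta (zvec w) ∈ C
  rw [h]
  exact hC.2.1 w hw _ (hC.2.2 kappa w hw)

lemma mem_rightDual_iff {C : Set (VE n)} (hC : IsLinearCode C) (z : VE n) :
    z ∈ rightDual C ↔ resVec z ∈ dualF (torCode C) := by
  constructor
  · intro h v hv
    have := (sympE_eq_zero_iff (evec zeta v) z).1 (h (evec zeta v) hv)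
    rw [zvec_evec] at this
    rw [sympF_comm]
    exact this.2
  · intro h w hw
    refine (sympE_eq_zero_iff w z).2 ⟨?_, ?_⟩
    · rw [sympF_comm]; exact h _ (res_sub_tor hC ⟨w, hw, rfl⟩)
    · rw [sympF_comm]; exact h _ (zvec_mem_tor hC hw)

/-- `C` as an additive subgroup. -/
def codeGroup (C : Set (VE n)) (hC : IsLinearCode C) : AddSubgroup (VE n) where
  carrier := C
  zero_mem' := hC.1
  add_mem' := fun ha hb => hC.2.1 _ ha _ hb
  neg_mem' := by
    intro x hx
    have h : -x = x := Prod.ext (funext fun i => e_neg _) (funext fun i => e_neg _)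
    rwa [h]

lemma card_code (C : Set (VE n)) (hC : IsLinearCode C) :
    Nat.card C = Nat.card (resCode C) * Nat.card (torCode C) := by
  classical
  set G := codeGroup C hC with hG
  let f : G →+ VF n := AddMonoidHom.mk' (fun x => resVec x.1) (fun a b => resVec_add _ _)
  have hCG : Nat.card C = Nat.card G := Nat.card_congr (Equiv.subtypeEquivRight fun x => Iff.rfl)
  have h1 : Nat.card G = Nat.card (G ⧸ f.ker) * Nat.card f.ker :=
    AddSubgroup.card_eq_card_quotient_mul_card_addSubgroup f.ker
  have h2 : Nat.card (G ⧸ f.ker) = Nat.card (resCode C) := by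
    rw [Nat.card_congr (QuotientAddGroup.quotientKerEquivRange f).toEquiv]
    refine Nat.card_congr (Equiv.subtypeEquivRight fun x => ?_)
    constructor
    · rintro ⟨⟨w, hw⟩, rfl⟩; exact ⟨w, hw, rfl⟩
    · rintro ⟨w, hw, rfl⟩; exact ⟨⟨w, hw⟩, rfl⟩
  have h3 : Nat.card f.ker = Nat.card (torCode C) := by
    refine Nat.card_congr ?_
    refine
      { toFun := fun x => ⟨zvec x.1.1, ?_⟩
        invFun := fun v => ⟨⟨evec zeta v.1, v.2⟩, ?_⟩
        left_inv := ?_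
        right_inv := ?_ }
    · have hres : resVec (x.1 : VE n) = 0 := (AddMonoidHom.mem_ker (f := f)).1 x.2
      have hx : evec zeta (zvec x.1.1) = x.1.1 :=
        Prod.ext
          (funext fun i => e_ker _ (congrFun (congrArg Prod.fst hres) i))
          (funext fun i => e_ker _ (congrFun (congrArg Prod.snd hres) i))
      show evec zeta (zvec x.1.1) ∈ C
      rw [hx]
      exact x.1.2
    · exact (AddMonoidHom.mem_ker (f := f)).2 (resVec_evec v.1)
    · rintro ⟨⟨w, hw⟩, hker⟩
      have hres : resVec w = 0 := (AddMonoidHom.mem_ker (f := f)).1 hker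
      refine Subtype.ext (Subtype.ext ?_)
      exact Prod.ext
        (funext fun i => e_ker _ (congrFun (congrArg Prod.fst hres) i))
        (funext fun i => e_ker _ (congrFun (congrArg Prod.snd hres) i))
    · intro v
      exact Subtype.ext (zvec_evec v.1)
  rw [hCG, h1, h2, h3]

end Ering
namespace Ering

variable {n : ℕ}

lemma zmod2_cases (c : ZMod 2) : c = 0 ∨ c = 1 := by revert c; decide

lemma sympF_add_left (a b w : VF n) : sympF (a + b) w = sympF a w + sympF b w := by
  simp only [sympF, Prod.fst_add, Prod.snd_add, Pi.add_apply, add_mul,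
    Finset.sum_add_distrib]
  ring

lemma sympF_add_right (a b w : VF n) : sympF w (a + b) = sympF w a + sympF w b := by
  rw [sympF_comm, sympF_add_left, sympF_comm a w, sympF_comm b w]

lemma sympF_zero_left (w : VF n) : sympF 0 w = 0 := by
  simp [sympF]

lemma sympF_zero_right (w : VF n) : sympF w 0 = 0 := by
  rw [sympF_comm]; exact sympF_zero_left w

lemma sympF_smul_left (c : ZMod 2) (a w : VF n) : sympF (c • a) w = c • sympF a w := by
  rcases zmod2_cases c with rfl | rfl
  · rw [zero_smul, sympF_zero_left, zero_smul]
  · rw [one_smul, one_smul]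

lemma sympF_smul_right (c : ZMod 2) (a w : VF n) : sympF w (c • a) = c • sympF w a := by
  rw [sympF_comm, sympF_smul_left, sympF_comm a w]

/-- `sympF` as a bilinear form over `F₂`. -/
def sympB (n : ℕ) : LinearMap.BilinForm (ZMod 2) (VF n) :=
  LinearMap.mk₂ (ZMod 2) sympF sympF_add_left sympF_smul_left (fun m a b => sympF_add_right a b m) (fun c m n_ => sympF_smul_right c n_ m)

@[simp] lemma sympB_apply (x y : VF n) : sympB n x y = sympF x y := by
  unfold sympB
  rw [LinearMap.mk₂_apply]

lemma sympB_nondeg : (sympB n).Nondegenerate := by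
  refine (LinearMap.IsRefl.nondegenerate_iff_separatingLeft
    (fun x y h => by rw [sympB_apply] at h ⊢; rw [sympF_comm]; exact h)).2 ?_
  intro x hx
  have h1 : ∀ i, x.1 i = 0 := by
    intro i
    have := hx ((0 : Fin n → ZMod 2), Pi.single i 1)
    simpa [sympF, Pi.single_apply, mul_ite, Finset.sum_ite_eq'] using this
  have h2 : ∀ i, x.2 i = 0 := by
    intro i
    have := hx (Pi.single i 1, (0 : Fin n → ZMod 2))
    simpa [sympF, Pi.single_apply, mul_ite, Finset.sum_ite_eq'] using this
  exact Prod.ext (funext h1) (funext h2)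

lemma sympB_refl : (sympB n).IsRefl := by
  intro x y h
  rw [sympB_apply] at h
  rw [sympB_apply, sympF_comm]
  exact h

/-- The residue code as an `F₂`-subspace. -/
def resSub (C : Set (VE n)) (hC : IsLinearCode C) : Submodule (ZMod 2) (VF n) where
  carrier := resCode C
  zero_mem' := ⟨0, hC.1, rfl⟩
  add_mem' := by
    rintro a b ⟨x, hx, rfl⟩ ⟨y, hy, rfl⟩
    exact ⟨x + y, hC.2.1 x hx y hy, (resVec_add x y)⟩
  smul_mem' := by
    intro c x hx
    rcases zmod2_cases c with rfl | rfl
    · rw [zero_smul]; exact ⟨0, hC.1, rfl⟩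
    · rwa [one_smul]

/-- The dual of a binary code as an `F₂`-subspace, when the code is the residue code. -/
lemma mem_orth_iff (C : Set (VE n)) (hC : IsLinearCode C) (z : VF n) :
    z ∈ (sympB n).orthogonal (resSub C hC) ↔ z ∈ dualF (resCode C) := by
  rw [LinearMap.BilinForm.mem_orthogonal_iff]
  constructor
  · intro h w hw
    have := h w hw
    rw [sympB_apply, sympF_comm] at this
    exact this
  · intro h w hw
    rw [sympB_apply, sympF_comm]
    exact h w hw

lemma card_pow_finrank (W : Submodule (ZMod 2) (VF n)) :
    Nat.card W = 2 ^ Module.finrank (ZMod 2) W := by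
  have : Fintype W := Fintype.ofFinite W
  rw [Nat.card_eq_fintype_card, Module.card_eq_pow_finrank (K := ZMod 2), ZMod.card]

lemma finrank_VF : Module.finrank (ZMod 2) (VF n) = 2 * n := by
  rw [Module.finrank_prod, Module.finrank_pi, Fintype.card_fin]
  ring

lemma card_dualF {k : ℕ} (C : Set (VE n)) (hC : IsLinearCode C)
    (hres : Nat.card (resCode C) = 2 ^ k) :
    k ≤ 2 * n ∧ Nat.card (dualF (resCode C)) = 2 ^ (2 * n - k) := by
  have hcard : Nat.card (resSub C hC) = 2 ^ k := by
    rw [← hres]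
    exact Nat.card_congr (Equiv.subtypeEquivRight fun x => Iff.rfl)
  have hfr : Module.finrank (ZMod 2) (resSub C hC) = k := by
    have := card_pow_finrank (resSub C hC)
    rw [hcard] at this
    exact (Nat.pow_right_injective (le_refl 2) this.symm)
  have hk : k ≤ 2 * n := by
    rw [← hfr, ← finrank_VF]
    exact Submodule.finrank_le _
  refine ⟨hk, ?_⟩
  have horth : Module.finrank (ZMod 2) ((sympB n).orthogonal (resSub C hC)) = 2 * n - k := by
    rw [LinearMap.BilinForm.finrank_orthogonal sympB_nondeg, hfr, finrank_VF]
  have := card_pow_finrank ((sympB n).orthogonal (resSub C hC))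
  rw [horth] at this
  rw [← this]
  exact Nat.card_congr (Equiv.subtypeEquivRight fun x => (mem_orth_iff C hC x).symm)

/-- Splitting `E`-vectors into first and second binary components. -/
def splitEquiv (n : ℕ) : VE n ≃ VF n × VF n where
  toFun x := (resVec x, zvec x)
  invFun p := (fun i => ((p.1.1 i, p.2.1 i) : Ering), fun i => ((p.1.2 i, p.2.2 i) : Ering))
  left_inv x := rfl
  right_inv p := rfl

lemma card_leftDual (C : Set (VE n)) :
    Nat.card (leftDual C) =
      Nat.card (dualF (resCode C)) * Nat.card (dualF (resCode C)) := by
  have e1 : leftDual C ≃ (dualF (resCode C) ×ˢ dualF (resCode C) : Set (VF n × VF n)) :=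
    Equiv.subtypeEquiv (splitEquiv n) (fun x => by
      rw [Set.mem_prod]
      exact mem_leftDual_iff x)
  rw [Nat.card_congr (e1.trans (Equiv.Set.prod _ _)), Nat.card_prod]

end Ering
open Ering
/-- `|C|·|C^{⊥_{S_L}}| = 4^{2n}·2^{k₂}`; hence `C` is left symplectic
nice iff `C` is free, in which case `C^{⊥_{S_L}} = C^{⊥_S}`. -/
theorem Ering.left_nice_iff_free {n k₁ k₂ : ℕ} (C : Set (VE n)) (hC : IsLinearCode C)
    (hres : Nat.card ↥(resCode C) = 2 ^ k₁)
    (htor : Nat.card ↥(torCode C) = 2 ^ (k₁ + k₂)) :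
    Nat.card ↥C * Nat.card ↥(leftDual C) = 4 ^ (2 * n) * 2 ^ k₂ ∧
    (Nat.card ↥C * Nat.card ↥(leftDual C) = 4 ^ (2 * n) ↔ IsFree C) ∧
    (IsFree C → leftDual C = dual C) := by
  obtain ⟨hk, hdual⟩ := card_dualF C hC hres
  have hcC : Nat.card ↥C = 2 ^ k₁ * 2 ^ (k₁ + k₂) := by
    rw [card_code C hC, hres, htor]
  have hld : Nat.card ↥(leftDual C) = 2 ^ (2 * n - k₁) * 2 ^ (2 * n - k₁) := by
    rw [card_leftDual C, hdual]
  have hmain : Nat.card ↥C * Nat.card ↥(leftDual C) = 4 ^ (2 * n) * 2 ^ k₂ := by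
    rw [hcC, hld, show (4 : ℕ) = 2 ^ 2 from rfl, ← pow_mul]
    simp only [← pow_add]
    congr 1
    omega
  have hfree_iff : IsFree C ↔ k₂ = 0 := by
    constructor
    · intro hf
      have h' := htor
      rw [← hf, hres] at h'
      have := Nat.pow_right_injective (le_refl 2) h'
      omega
    · intro h0
      have hle : (torCode C).ncard ≤ (resCode C).ncard := by
        rw [← Nat.card_coe_set_eq, ← Nat.card_coe_set_eq, hres, htor, h0, add_zero]
      exact Set.eq_of_subset_of_ncard_le (res_sub_tor hC) hle (Set.toFinite _)
  refine ⟨hmain, ?_, ?_⟩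
  · rw [hmain]
    constructor
    · intro h
      have h4 : (0 : ℕ) < 4 ^ (2 * n) := by positivity
      have h1 : (2 : ℕ) ^ k₂ = 1 :=
        Nat.eq_of_mul_eq_mul_left h4 (h.trans (mul_one _).symm)
      have hk2 : k₂ = 0 := by
        by_contra hne
        have : (2 : ℕ) ^ k₂ ≥ 2 ^ 1 := Nat.pow_le_pow_right (by norm_num) (by omega)
        omega
      exact hfree_iff.2 hk2
    · intro hf
      rw [hfree_iff.1 hf, pow_zero, mul_one]
  · intro hf
    apply Set.Subset.antisymm
    · intro z hz
      refine ⟨hz, ?_⟩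
      rw [mem_rightDual_iff hC]
      rw [← hf]
      exact ((mem_leftDual_iff z).1 hz).1
    · exact Set.inter_subset_left
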